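/- Let a_1, ..., a_s be pairwise coprime positive integers each ≥ 2 and n ∈ ℕ. Then the Fourier–Dedekind sum satisfies s_{−n}(a_1,...,a_{s−1}; a_s) = B' − B − Σ_{i=1}^{s−1} s_{−(n − a_s({[n/a_s]/a_i}·a_i + 1))}(a_1,...,a_{i−1},a_{i+1},...,a_s; a_i), where B is the polynomial part of p_{(a_1,...,a_s)}(n), and B' = Σ_{t=0}^{[n/a_s]} (polynomial part of p_{(a_1,...,a_{s−1})}(n − a_s t)); moreover B' − B is a quasi-polynomial in n. -/

import Mathlib

open Complex

section Aux

open Finset Polynomial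

private lemma exists_sum_poly' (Q : Polynomial ℂ) :
    ∃ P : Polynomial ℂ, ∀ n : ℕ, P.eval (n:ℂ) = ∑ j ∈ Finset.range n, Q.eval (j:ℂ) := by
  induction Q using Polynomial.induction_on' with
  | add p q hp hq =>
    obtain ⟨P1, h1⟩ := hp; obtain ⟨P2, h2⟩ := hq
    exact ⟨P1 + P2, fun n => by simp [h1, h2, Finset.sum_add_distrib]⟩
  | monomial p c =>
    refine ⟨(C c) * ∑ i ∈ Finset.range (p+1),
      C ((_root_.bernoulli i * ((p + 1).choose i) / ((p:ℚ) + 1) : ℚ) : ℂ) * X^(p+1-i), fun n => ?_⟩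
    have h2 : (∑ j ∈ Finset.range n, (j:ℂ)^p) =
        ∑ i ∈ Finset.range (p+1),
          ((_root_.bernoulli i * ((p + 1).choose i) / ((p:ℚ)+1) : ℚ) : ℂ) * (n:ℂ)^(p+1-i) := by
      have h := congrArg (fun q : ℚ => (q : ℂ)) (sum_range_pow n p)
      push_cast at h
      rw [h]
      push_cast
      exact Finset.sum_congr rfl fun i _ => by ring
    rw [Polynomial.eval_mul, Polynomial.eval_C, Polynomial.eval_finset_sum]
    simp only [Polynomial.eval_monomial, Polynomial.eval_mul, Polynomial.eval_C,
      Polynomial.eval_pow, Polynomial.eval_X]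
    rw [← Finset.mul_sum, ← h2, Finset.mul_sum]

private lemma sol_finite' {s : ℕ} (b : Fin s → ℕ) (hb : ∀ i, 1 ≤ b i) (q : ℕ) :
    Finite {x : Fin s → ℕ // ∑ i, x i * b i = q} := by
  have hle : ∀ x : {x : Fin s → ℕ // ∑ i, x i * b i = q}, ∀ i, x.1 i ≤ q := by
    intro x i
    calc x.1 i ≤ x.1 i * b i := Nat.le_mul_of_pos_right _ (hb i)
      _ ≤ ∑ j, x.1 j * b j :=
        Finset.single_le_sum (f := fun j => x.1 j * b j) (fun j _ => Nat.zero_le _) (mem_univ i)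
      _ = q := x.2
  apply Finite.of_injective (fun x : {x : Fin s → ℕ // ∑ i, x i * b i = q} =>
    (fun i => (⟨x.1 i, Nat.lt_succ_of_le (hle x i)⟩ : Fin (q+1)) : Fin s → Fin (q+1)))
  intro x y hxy
  ext i
  exact congrArg Fin.val (congrFun hxy i)

private lemma card_rec' (s : ℕ) (a : Fin (s+1) → ℕ) (ha : ∀ i, 1 ≤ a i) (n : ℕ) :
    Nat.card {x : Fin (s+1) → ℕ // ∑ i, x i * a i = n} =
    ∑ t ∈ range (n / a (Fin.last s) + 1),
      Nat.card {x : Fin s → ℕ // ∑ i, x i * a (Fin.castSucc i) = n - a (Fin.last s) * t} := by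
  set aL := a (Fin.last s) with haL
  set M := n / aL with hM
  have haLpos : 0 < aL := ha _
  have key : ∀ x : {x : Fin (s+1) → ℕ // ∑ i, x i * a i = n},
      x.1 (Fin.last s) < M + 1 ∧
      ∑ i, x.1 (Fin.castSucc i) * a (Fin.castSucc i) = n - aL * x.1 (Fin.last s) := by
    intro x
    have hsplit := x.2
    rw [Fin.sum_univ_castSucc, ← haL] at hsplit
    have hc : x.1 (Fin.last s) * aL = aL * x.1 (Fin.last s) := Nat.mul_comm _ _
    have h1 : x.1 (Fin.last s) * aL ≤ n := by omega
    have h2 : x.1 (Fin.last s) ≤ M := Nat.le_div_iff_mul_le haLpos |>.2 h1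
    exact ⟨Nat.lt_succ_of_le h2, by omega⟩
  have e : {x : Fin (s+1) → ℕ // ∑ i, x i * a i = n} ≃
      Σ t : Fin (M+1), {x : Fin s → ℕ // ∑ i, x i * a (Fin.castSucc i) = n - aL * t} := by
    refine ⟨fun x => ⟨⟨x.1 (Fin.last s), (key x).1⟩, ⟨fun i => x.1 (Fin.castSucc i), (key x).2⟩⟩,
      fun p => ⟨Fin.snoc p.2.1 (p.1 : ℕ), ?_⟩, ?_, ?_⟩
    · have hle : (p.1 : ℕ) ≤ M := Nat.lt_succ_iff.1 p.1.2
      have ht : aL * (p.1 : ℕ) ≤ n := by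
        calc aL * (p.1 : ℕ) ≤ aL * M := Nat.mul_le_mul_left _ hle
          _ ≤ n := by rw [hM, Nat.mul_comm]; exact Nat.div_mul_le_self n aL
      have hc : (p.1 : ℕ) * aL = aL * (p.1 : ℕ) := Nat.mul_comm _ _
      rw [Fin.sum_univ_castSucc, ← haL]
      simp only [Fin.snoc_castSucc, Fin.snoc_last]
      rw [p.2.2]
      omega
    · intro x
      apply Subtype.ext
      exact Fin.snoc_init_self x.1
    · rintro ⟨t, y⟩
      refine Sigma.subtype_ext ?_ ?_
      · apply Fin.ext; simp
      · funext i; simp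
  haveI inst : ∀ t : Fin (M+1),
      Fintype {x : Fin s → ℕ // ∑ i, x i * a (Fin.castSucc i) = n - aL * t} :=
    fun t => @Fintype.ofFinite _ (sol_finite' _ (fun i => ha _) _)
  rw [Nat.card_congr e, Nat.card_eq_fintype_card, Fintype.card_sigma]
  calc ∑ t : Fin (M+1), Fintype.card {x : Fin s → ℕ // ∑ i, x i * a (Fin.castSucc i) = n - aL * t}
      = ∑ t : Fin (M+1),
          Nat.card {x : Fin s → ℕ // ∑ i, x i * a (Fin.castSucc i) = n - aL * (t : ℕ)} := by
        simp [Nat.card_eq_fintype_card]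
    _ = _ := Fin.sum_univ_eq_sum_range
        (fun t => Nat.card {x : Fin s → ℕ // ∑ i, x i * a (Fin.castSucc i) = n - aL * t}) (M+1)

private lemma prod_erase_castSucc' {M : Type*} [CommMonoid M] {s : ℕ} (i : Fin s)
    (f : Fin (s+1) → M) :
    ∏ j ∈ univ.erase (Fin.castSucc i), f j =
      f (Fin.last s) * ∏ j ∈ univ.erase i, f (Fin.castSucc j) := by
  have hset : (univ : Finset (Fin (s+1))).erase (Fin.castSucc i) =
      insert (Fin.last s) ((univ.erase i).image Fin.castSucc) := by
    ext j
    simp only [mem_erase, mem_univ, and_true, mem_insert, mem_image]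
    constructor
    · intro hj
      rcases Fin.eq_castSucc_or_eq_last j with ⟨k, rfl⟩ | rfl
      · exact Or.inr ⟨k, ⟨by simpa [Fin.castSucc_inj] using hj, rfl⟩⟩
      · exact Or.inl rfl
    · rintro (rfl | ⟨k, hk, rfl⟩)
      · exact (Fin.castSucc_lt_last i).ne'
      · simpa [Fin.castSucc_inj] using hk
  rw [hset, prod_insert, prod_image]
  · intro x _ y _ h; exact Fin.castSucc_injective _ h
  · simp only [mem_image, mem_erase, mem_univ, and_true]
    rintro ⟨k, _, hk⟩
    exact (Fin.castSucc_lt_last k).ne hk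

end Aux

/-- The Fourier–Dedekind sum
`s_n(a_1,…,\hat{a_i},…,a_s; a_i) = (1/a_i) Σ_{k=1}^{a_i−1} ξ^{kn} / Π_{j≠i}(1 − ξ^{k a_j})`
with `ξ = exp(2πi/a_i)`; the paper's `s_{−n}(…; a_i)` is `fourierDedekind s a i (−n)`. -/
noncomputable def fourierDedekind (s : ℕ) (a : Fin s → ℕ) (i : Fin s) (n : ℤ) : ℂ :=
  (1 / (a i : ℂ)) * ∑ k ∈ Finset.Ico 1 (a i),
    Complex.exp (2 * Real.pi * Complex.I / (a i : ℂ)) ^ ((k : ℤ) * n) /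
      ∏ j ∈ Finset.univ.erase i,
        (1 - Complex.exp (2 * Real.pi * Complex.I / (a i : ℂ)) ^ (k * a j))

/-- A function `ℕ → ℂ` is a quasi-polynomial if on each residue class modulo some
positive period it is given by a polynomial. -/
def IsQuasiPolyC (f : ℕ → ℂ) : Prop :=
  ∃ T : ℕ, 0 < T ∧ ∃ p : ℕ → Polynomial ℂ,
    ∀ m i : ℕ, i < T → f (T * m + i) = (p i).eval (m : ℂ)

section Key

open Finset

private lemma key_sum' (s : ℕ) (a : Fin (s+1) → ℕ) (ha : ∀ i, 2 ≤ a i)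
    (hcop : ∀ i j, i ≠ j → Nat.Coprime (a i) (a j)) (n : ℕ) (i : Fin s) :
    ∑ t ∈ range (n / a (Fin.last s) + 1),
        fourierDedekind s (fun i => a (Fin.castSucc i)) i (-((n - a (Fin.last s) * t : ℕ) : ℤ)) =
      fourierDedekind (s+1) a (Fin.castSucc i) (-(n:ℤ)) -
      fourierDedekind (s+1) a (Fin.castSucc i)
        (-((n:ℤ) - (a (Fin.last s):ℤ) *
            (((n / a (Fin.last s)) % a (Fin.castSucc i) : ℕ) + 1))) := by
  have hc2 : 2 ≤ a (Fin.castSucc i) := ha _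
  have haL2 : 2 ≤ a (Fin.last s) := ha _
  set c := a (Fin.castSucc i) with hcdef
  set aL := a (Fin.last s) with haLdef
  set M := n / aL with hMdef
  set ζ : ℂ := Complex.exp (2 * Real.pi * Complex.I / (c : ℂ)) with hζdef
  have hζ : IsPrimitiveRoot ζ c := Complex.isPrimitiveRoot_exp c (by omega)
  have hζ0 : ζ ≠ 0 := Complex.exp_ne_zero _
  have hcopc : Nat.Coprime c aL := hcop _ _ (Fin.castSucc_lt_last i).ne
  simp only [fourierDedekind]
  rw [← Finset.mul_sum, Finset.sum_comm, ← mul_sub, ← Finset.sum_sub_distrib]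
  congr 1
  apply Finset.sum_congr rfl
  intro k hk
  rw [Finset.mem_Ico] at hk
  set D : ℂ := ∏ j ∈ univ.erase i, (1 - ζ ^ (k * a (Fin.castSucc j))) with hDdef
  set z : ℂ := ζ ^ (k * aL) with hzdef
  have hz1 : z ≠ 1 := by
    intro h
    have hdvd : c ∣ k * aL := (hζ.pow_eq_one_iff_dvd _).1 h
    have h1 : c ∣ k := Nat.Coprime.dvd_of_dvd_mul_right hcopc hdvd
    have := Nat.le_of_dvd (by omega) h1
    omega
  have hzc : z ^ c = 1 := by
    rw [hzdef, ← pow_mul, mul_comm (k * aL) c, mul_comm k aL, ← mul_assoc, pow_mul, pow_mul,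
      hζ.pow_eq_one, one_pow, one_pow]
  have hprod : ∏ j ∈ univ.erase (Fin.castSucc i), (1 - ζ ^ (k * a j)) = (1 - z) * D := by
    rw [prod_erase_castSucc' i (fun j => 1 - ζ ^ (k * a j))]
  set w : ℂ := ζ ^ ((k:ℤ) * (-(n:ℤ))) with hwdef
  have hA : ∀ t ∈ range (M+1), ζ ^ ((k:ℤ) * (-((n - aL * t : ℕ) : ℤ))) = w * z ^ t := by
    intro t ht
    rw [Finset.mem_range] at ht
    have hle : aL * t ≤ n := by
      calc aL * t ≤ aL * M := Nat.mul_le_mul_left _ (by omega)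
        _ ≤ n := by rw [hMdef, Nat.mul_comm]; exact Nat.div_mul_le_self n aL
    have hcast : ((n - aL * t : ℕ) : ℤ) = (n : ℤ) - (aL : ℤ) * t := by
      push_cast [hle]; ring
    rw [hcast, show (k:ℤ) * (-((n:ℤ) - (aL:ℤ)*t)) = (k:ℤ) * (-(n:ℤ)) + ((k * aL * t : ℕ) : ℤ)
        by push_cast; ring, zpow_add₀ hζ0, hwdef, zpow_natCast, pow_mul]
  have hC : ζ ^ ((k:ℤ) * (-((n:ℤ) - (aL:ℤ) * ((M % c : ℕ) + 1)))) = w * z ^ (M + 1) := by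
    have hMM : z ^ (M + 1) = z ^ (M % c + 1) := by
      conv_lhs => rw [show M + 1 = c * (M / c) + (M % c + 1) by
        have := Nat.div_add_mod M c; omega]
      rw [pow_add, pow_mul, hzc, one_pow, one_mul]
    rw [hMM, show (k:ℤ) * (-((n:ℤ) - (aL:ℤ) * ((M % c : ℕ) + 1))) =
        (k:ℤ) * (-(n:ℤ)) + ((k * aL * (M % c + 1) : ℕ) : ℤ) by push_cast; ring,
      zpow_add₀ hζ0, hwdef, zpow_natCast, pow_mul]
  rw [Finset.sum_congr rfl fun t ht => by rw [hA t ht]]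
  rw [hprod, hC]
  have hS : ∑ t ∈ range (M + 1), w * z ^ t / D = (∑ t ∈ range (M+1), z ^ t) * (w / D) := by
    rw [Finset.sum_mul]
    exact Finset.sum_congr rfl fun t _ => by ring
  rw [hS, geom_sum_eq hz1, div_mul_div_comm, div_sub_div_same,
    show (1 - z) * D = -((z - 1) * D) by ring,
    show w - w * z ^ (M + 1) = -((z ^ (M+1) - 1) * w) by ring, neg_div_neg_eq]

end Key

theorem fourier_dedekind_reciprocity (s : ℕ) (a : Fin (s + 1) → ℕ)
    (ha : ∀ i, 2 ≤ a i) (hcop : ∀ i j, i ≠ j → Nat.Coprime (a i) (a j))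
    (B Bp : Polynomial ℂ)
    (hB : ∀ q : ℕ,
      ((Nat.card {x : Fin (s + 1) → ℕ // ∑ i, x i * a i = q} : ℚ) : ℂ) =
        B.eval (q : ℂ) + ∑ i, fourierDedekind (s + 1) a i (-(q : ℤ)))
    (hBp : ∀ q : ℕ,
      ((Nat.card {x : Fin s → ℕ // ∑ i, x i * a (Fin.castSucc i) = q} : ℚ) : ℂ) =
        Bp.eval (q : ℂ) +
          ∑ i, fourierDedekind s (fun i => a (Fin.castSucc i)) i (-(q : ℤ))) :
    (∀ n : ℕ,
      fourierDedekind (s + 1) a (Fin.last s) (-(n : ℤ)) =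
        (∑ t ∈ Finset.range (n / a (Fin.last s) + 1),
            Bp.eval ((n : ℂ) - (a (Fin.last s) : ℂ) * (t : ℂ))) -
          B.eval (n : ℂ) -
          ∑ i : Fin s,
            fourierDedekind (s + 1) a (Fin.castSucc i)
              (-((n : ℤ) -
                  (a (Fin.last s) : ℤ) *
                    (((n / a (Fin.last s)) % a (Fin.castSucc i) : ℕ) + 1)))) ∧
    IsQuasiPolyC (fun n : ℕ =>
      (∑ t ∈ Finset.range (n / a (Fin.last s) + 1),
          Bp.eval ((n : ℂ) - (a (Fin.last s) : ℂ) * (t : ℂ))) - B.eval (n : ℂ)) := by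
  constructor
  · intro n
    set aL := a (Fin.last s) with haLdef
    set M := n / aL with hMdef
    have hle : ∀ t ∈ Finset.range (M+1), aL * t ≤ n := by
      intro t ht
      rw [Finset.mem_range] at ht
      calc aL * t ≤ aL * M := Nat.mul_le_mul_left _ (by omega)
        _ ≤ n := by rw [hMdef, Nat.mul_comm]; exact Nat.div_mul_le_self n aL
    have hcard := card_rec' s a (fun i => by have := ha i; omega) n
    have E1 : ((Nat.card {x : Fin (s + 1) → ℕ // ∑ i, x i * a i = n} : ℚ) : ℂ) =
        ∑ t ∈ Finset.range (M+1),
          ((Nat.card {x : Fin s → ℕ // ∑ i, x i * a (Fin.castSucc i) = n - aL * t} : ℚ) : ℂ) := by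
      push_cast
      exact_mod_cast congrArg (fun x : ℕ => (x : ℂ)) hcard
    have E2 : B.eval (n:ℂ) + ∑ i, fourierDedekind (s+1) a i (-(n:ℤ)) =
        (∑ t ∈ Finset.range (M+1), Bp.eval ((n:ℂ) - (aL:ℂ) * t)) +
        ∑ i : Fin s, ∑ t ∈ Finset.range (M+1),
          fourierDedekind s (fun i => a (Fin.castSucc i)) i (-((n - aL * t : ℕ) : ℤ)) := by
      rw [← hB n, E1, ← Finset.sum_comm, ← Finset.sum_add_distrib]
      apply Finset.sum_congr rfl
      intro t ht
      rw [hBp (n - aL * t)]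
      congr 2
      push_cast [hle t ht]
      ring
    rw [Finset.sum_congr rfl (fun i _ => key_sum' s a ha hcop n i)] at E2
    rw [Fin.sum_univ_castSucc
      (f := fun i => fourierDedekind (s+1) a i (-(n:ℤ))), Finset.sum_sub_distrib] at E2
    linear_combination E2
  · set aL := a (Fin.last s) with haLdef
    have haL2 : 2 ≤ aL := ha _
    have hP : ∀ i : ℕ, ∃ P : Polynomial ℂ, ∀ n : ℕ, P.eval (n:ℂ) =
        ∑ j ∈ Finset.range n,
          (Bp.comp (Polynomial.C (i:ℂ) + Polynomial.C (aL:ℂ) * Polynomial.X)).eval (j:ℂ) :=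
      fun i => exists_sum_poly' _
    choose P hPs using hP
    refine ⟨aL, by omega, fun i =>
      (P i).comp (Polynomial.X + Polynomial.C 1) -
        B.comp (Polynomial.C (i:ℂ) + Polynomial.C (aL:ℂ) * Polynomial.X), ?_⟩
    intro m i hi
    have hdiv : (aL * m + i) / aL = m := by
      rw [Nat.mul_add_div (by omega), Nat.div_eq_of_lt hi, Nat.add_zero]
    simp only [hdiv]
    have hre := Finset.sum_range_reflect
      (fun t => Bp.eval (((aL * m + i : ℕ) : ℂ) - (aL:ℂ) * t)) (m+1)
    have hsum : ∑ t ∈ Finset.range (m+1), Bp.eval (((aL * m + i : ℕ) : ℂ) - (aL:ℂ) * t) =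
        ∑ j ∈ Finset.range (m+1),
          (Bp.comp (Polynomial.C (i:ℂ) + Polynomial.C (aL:ℂ) * Polynomial.X)).eval (j:ℂ) := by
      rw [← hre]
      apply Finset.sum_congr rfl
      intro j hj
      rw [Finset.mem_range] at hj
      have hj' : j ≤ m := by omega
      have : ((m + 1 - 1 - j : ℕ) : ℂ) = (m : ℂ) - j := by
        push_cast [Nat.sub_le, hj']
        ring
      rw [Polynomial.eval_comp]
      simp only [Polynomial.eval_add, Polynomial.eval_mul, Polynomial.eval_C, Polynomial.eval_X]
      rw [this]
      congr 1
      push_cast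
      ring
    rw [hsum, ← hPs i (m+1)]
    simp only [Polynomial.eval_sub, Polynomial.eval_comp, Polynomial.eval_add,
      Polynomial.eval_mul, Polynomial.eval_C, Polynomial.eval_X, Polynomial.eval_one]
    congr 2
    · push_cast; ring
    · push_cast; ring
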